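/- Suppose {f_l}_{l≥0} is a sequence of functions in H^∞(D^{n-1}), each with f_l^{-1} ∈ L^∞(T^{n-1}), such that f_l/f_{l+1} also lies in H^∞(D^{n-1}) with bounded inverse boundary values for every l. Then M = ⊕_{l≥0} f_l(z₁,…,z_{n-1})·H²(D^{n-1})·z_n^l is a closed subspace of H²(D^n) invariant under multiplication by each of z₁,…,z_n. -/

import Mathlib

/-!
Common setup: we model the Hardy space `H²(𝔻ⁿ)` via boundary values on the
`n`-torus `Tⁿ = (ℝ/ℤ)ⁿ`: `H²` is the subspace of `L²(Tⁿ)` of functions whose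
Fourier coefficients with some negative index vanish.  `H^∞` functions are
(a.e. classes of) essentially bounded measurable functions with analytic
(nonnegative) Fourier spectrum, identified with their boundary functions `f*`.
Multiplication operators are expressed via a.e. pointwise products.
-/

open MeasureTheory Complex
open scoped ComplexConjugate

noncomputable section

/-- The `n`-torus. -/
abbrev Torus (n : ℕ) := Fin n → AddCircle (1 : ℝ)

/-- `L²(Tⁿ)`. -/
abbrev Lp2 (n : ℕ) := Lp ℂ 2 (volume : Measure (Torus n))

/-- The monomial `z^α` (as a function on the torus). -/
def charFun {n : ℕ} (α : Fin n → ℤ) : Torus n → ℂ := fun x => ∏ i, fourier (α i) (x i)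

lemma charFun_continuous {n : ℕ} (α : Fin n → ℤ) : Continuous (charFun α) :=
  continuous_finset_prod _ fun i _ => (fourier (α i)).continuous.comp (continuous_apply i)

lemma charFun_norm {n : ℕ} (α : Fin n → ℤ) (x : Torus n) : ‖charFun α x‖ = 1 := by
  rw [_root_.charFun, norm_prod]
  simp [Circle.norm_coe]

lemma charFun_memℒp {n : ℕ} (α : Fin n → ℤ) :
    MemLp (charFun α) 2 (volume : Measure (Torus n)) :=
  MemLp.of_bound (charFun_continuous α).aestronglyMeasurable 1
    (Filter.Eventually.of_forall fun x => (charFun_norm α x).le)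

/-- The monomial `z^α` as an element of `L²(Tⁿ)`. -/
def charLp {n : ℕ} (α : Fin n → ℤ) : Lp2 n := (charFun_memℒp α).toLp _

/-- The `α`-th Fourier coefficient of `f ∈ L²(Tⁿ)`. -/
def coeff {n : ℕ} (f : Lp2 n) (α : Fin n → ℤ) : ℂ := inner (𝕜 := ℂ) (charLp α) f

/-- The Hardy space `H²(𝔻ⁿ)` (boundary model): elements of `L²(Tⁿ)` whose Fourier
coefficients vanish off `ℕⁿ`. -/
def H2 (n : ℕ) : Submodule ℂ (Lp2 n) where
  carrier := {f | ∀ α : Fin n → ℤ, (∃ i, α i < 0) → coeff f α = 0}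
  add_mem' := fun {f} {g} hf hg α hα => by
    have h1 := hf α hα; have h2 := hg α hα
    simp only [coeff] at h1 h2 ⊢
    rw [inner_add_right, h1, h2, add_zero]
  zero_mem' := fun α _ => by simp [coeff]
  smul_mem' := fun c {f} hf α hα => by
    have h1 := hf α hα
    simp only [coeff] at h1 ⊢
    rw [inner_smul_right, h1, mul_zero]

/-- `H²(𝔻ⁿ)` as a subset of `L²(Tⁿ)`. -/
def H2set (n : ℕ) : Set (Lp2 n) := (H2 n : Set (Lp2 n))

/-- `φ` is (the boundary function of) an `H^∞(𝔻ⁿ)` function. -/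
structure IsHinf {n : ℕ} (φ : Torus n → ℂ) : Prop where
  memLinf : MemLp φ ⊤ (volume : Measure (Torus n))
  analytic : ∀ α : Fin n → ℤ, (∃ i, α i < 0) →
    ∫ x, conj (charFun α x) * φ x ∂(volume : Measure (Torus n)) = 0

/-- Generalized inner: `φ ∈ H^∞` with `1/φ* ∈ L^∞`, i.e. `|φ*|` essentially bounded below. -/
def IsGenInner {n : ℕ} (φ : Torus n → ℂ) : Prop :=
  IsHinf φ ∧ ∃ c : ℝ, 0 < c ∧ ∀ᵐ x ∂(volume : Measure (Torus n)), c ≤ ‖φ x‖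

/-- Inner: `φ ∈ H^∞` with `|φ*| = 1` a.e. -/
def IsInner {n : ℕ} (φ : Torus n → ℂ) : Prop :=
  IsHinf φ ∧ ∀ᵐ x ∂(volume : Measure (Torus n)), ‖φ x‖ = 1

/-- The image `φ·M` of a set `M ⊆ L²` under multiplication by a function `φ`. -/
def mulSet {n : ℕ} (φ : Torus n → ℂ) (M : Set (Lp2 n)) : Set (Lp2 n) :=
  {g | ∃ f ∈ M, (g : Torus n → ℂ) =ᵐ[(volume : Measure (Torus n))]
      fun x => φ x * (f : Torus n → ℂ) x}

/-- The coordinate function `z_i` on the torus. -/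
def zCoord {n : ℕ} (i : Fin n) : Torus n → ℂ := charFun (Pi.single i 1)

/-- Set-sum `A + B`. -/
def sumSet {n : ℕ} (A B : Set (Lp2 n)) : Set (Lp2 n) := {h | ∃ a ∈ A, ∃ b ∈ B, h = a + b}

/-- Orthogonal difference `A ⊖ B`: elements of `A` orthogonal to `B`. -/
def osub {n : ℕ} (A B : Set (Lp2 n)) : Set (Lp2 n) :=
  {x ∈ A | ∀ y ∈ B, (inner (𝕜 := ℂ) y x : ℂ) = 0}

/-- `M` is a closed subspace of `L²(Tⁿ)` invariant under multiplication by every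
coordinate `z₁, …, zₙ`. -/
structure IsInvariantSubspace {n : ℕ} (M : Set (Lp2 n)) : Prop where
  zero_mem : (0 : Lp2 n) ∈ M
  add_mem : ∀ f g : Lp2 n, f ∈ M → g ∈ M → f + g ∈ M
  smul_mem : ∀ (c : ℂ) (f : Lp2 n), f ∈ M → c • f ∈ M
  closed : IsClosed M
  shift_mem : ∀ i : Fin n, mulSet (zCoord i) M ⊆ M

/-- Lift of a function of `z₁,…,zₙ` to the `(n+1)`-torus (ignoring the last variable). -/
def liftLast {n : ℕ} (φ : Torus n → ℂ) : Torus (n+1) → ℂ := fun x => φ (Fin.init x)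

/-- Lift of a function of `z₂,…,z_{n+1}` to the `(n+1)`-torus (ignoring the first variable). -/
def liftTail {n : ℕ} (φ : Torus n → ℂ) : Torus (n+1) → ℂ := fun x => φ (Fin.tail x)

/-- Lift of a one-variable function to the `(n+1)`-torus via the first variable. -/
def liftFst {n : ℕ} (φ : Torus 1 → ℂ) : Torus (n+1) → ℂ := fun x => φ (fun _ => x 0)

/-- `H²(𝔻ⁿ)` embedded in `L²(T^{n+1})` as the functions independent of the last variable. -/
def H2resLast (n : ℕ) : Set (Lp2 (n+1)) :=
  {F | ∀ α : Fin (n+1) → ℤ, ((∃ i, α i < 0) ∨ α (Fin.last n) ≠ 0) → coeff F α = 0}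

/-- `H²(𝔻ⁿ)` (variables `z₂,…,z_{n+1}`) embedded in `L²(T^{n+1})`:
functions independent of the first variable. -/
def H2resFst (n : ℕ) : Set (Lp2 (n+1)) :=
  {F | ∀ α : Fin (n+1) → ℤ, ((∃ i, α i < 0) ∨ α 0 ≠ 0) → coeff F α = 0}

/-- `H²(𝔻)` in the first variable only, inside `L²(T^{n+1})`. -/
def H2onlyFst (n : ℕ) : Set (Lp2 (n+1)) :=
  {F | ∀ α : Fin (n+1) → ℤ, ((∃ i, α i < 0) ∨ (∃ i, i ≠ 0 ∧ α i ≠ 0)) → coeff F α = 0}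

/-- The `l`-th piece `z_n^l · f_l · H²(𝔻^{n-1})` of a sequence-based subspace
(distinguished variable: the last one). -/
def seqPiece {n : ℕ} (f : ℕ → Torus n → ℂ) (l : ℕ) : Set (Lp2 (n+1)) :=
  mulSet (fun x => charFun (Pi.single (Fin.last n) (l : ℤ)) x * liftLast (f l) x) (H2resLast n)

/-- The sequence-based subspace `⊕_{l≥0} f_l H²(𝔻^{n-1}) z_n^l`, as the closed span of its
(pairwise orthogonal, closed) pieces. -/
def seqM {n : ℕ} (f : ℕ → Torus n → ℂ) : Submodule ℂ (Lp2 (n+1)) :=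
  (Submodule.span ℂ (⋃ l : ℕ, seqPiece f l)).topologicalClosure

/-- Conditions (I) and (II): each `f_l` is generalized inner, and each quotient
`f_l / f_{l+1}` is a generalized inner function (expressed via `f_{l+1} · q = f_l`). -/
def SeqCond {n : ℕ} (f : ℕ → Torus n → ℂ) : Prop :=
  (∀ l, IsGenInner (f l)) ∧
  ∀ l, ∃ q : Torus n → ℂ, IsGenInner q ∧
    (fun x => f (l+1) x * q x) =ᵐ[(volume : Measure (Torus n))] f l

/-- The vector-valued Hardy space `H²(K)` with `K = H²(𝔻ⁿ)`, realized as `ℓ²` of the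
Taylor coefficients. -/
abbrev lpH (n : ℕ) := lp (fun _ : ℕ => H2 n) 2

/-- `G` is the image of `F` under multiplication by the independent variable (the shift). -/
def ShiftRel {K : Type*} [NormedAddCommGroup K] (F G : lp (fun _ : ℕ => K) 2) : Prop :=
  (G : ∀ _ : ℕ, K) 0 = 0 ∧ ∀ m, (G : ∀ _ : ℕ, K) (m + 1) = (F : ∀ _ : ℕ, K) m

/-- The `l`-th Taylor coefficient of a (boundary) function on the circle. -/
def hinfCoeff (φ : Torus 1 → ℂ) (l : ℤ) : ℂ :=
  ∫ x, conj (charFun (fun _ : Fin 1 => l) x) * φ x ∂(volume : Measure (Torus 1))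

/-- Unitary equivalence of (invariant) subspaces `M₁, M₂ ⊆ L²(Tⁿ)`: a surjective linear
isometry `U : M₁ → M₂` intertwining multiplication by every `H^∞` function. -/
def UnitaryEquivalent {n : ℕ} (M₁ M₂ : Set (Lp2 n)) : Prop :=
  ∃ U : Lp2 n → Lp2 n,
    (∀ f ∈ M₁, U f ∈ M₂) ∧
    (∀ g ∈ M₂, ∃ f ∈ M₁, U f = g) ∧
    (∀ f g : Lp2 n, f ∈ M₁ → g ∈ M₁ → U (f + g) = U f + U g) ∧
    (∀ (c : ℂ) (f : Lp2 n), f ∈ M₁ → U (c • f) = c • U f) ∧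
    (∀ f ∈ M₁, ‖U f‖ = ‖f‖) ∧
    (∀ φ : Torus n → ℂ, IsHinf φ → ∀ f ∈ M₁, ∀ g ∈ M₁, ∀ g' : Lp2 n,
      ((g : Torus n → ℂ) =ᵐ[(volume : Measure (Torus n))]
        fun x => φ x * (f : Torus n → ℂ) x) →
      ((g' : Torus n → ℂ) =ᵐ[(volume : Measure (Torus n))]
        fun x => φ x * ((U f : Lp2 n) : Torus n → ℂ) x) →
      U g = g')


namespace Aux

instance : Fact ((0:ℝ) < 1) := ⟨one_pos⟩

instance : IsProbabilityMeasure (volume : Measure (AddCircle (1:ℝ))) :=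
  ⟨by rw [AddCircle.measure_univ]; simp⟩

instance {m : ℕ} : IsProbabilityMeasure (volume : Measure (Torus m)) := by
  rw [volume_pi]; infer_instance

variable {m : ℕ}

lemma charFun_mul (α β : Fin m → ℤ) (x : Torus m) :
    charFun α x * charFun β x = charFun (α + β) x := by
  simp only [_root_.charFun, ← Finset.prod_mul_distrib]
  refine Finset.prod_congr rfl fun i _ => ?_
  rw [Pi.add_apply, fourier_add]

lemma conj_charFun (α : Fin m → ℤ) (x : Torus m) :
    conj (charFun α x) = charFun (-α) x := by
  simp only [_root_.charFun, map_prod]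
  refine Finset.prod_congr rfl fun i _ => ?_
  rw [Pi.neg_apply, fourier_neg]

lemma charFun_zero_eq (x : Torus m) : charFun (0 : Fin m → ℤ) x = 1 := by
  simp [_root_.charFun, fourier_zero]

lemma integral_fourier_one (k : ℤ) :
    ∫ x : AddCircle (1:ℝ), fourier k x = if k = 0 then 1 else 0 := by
  split_ifs with h
  · subst h
    simp only [fourier_zero]
    simp
  · exact integral_eq_zero_of_add_right_eq_neg (fourier_add_half_inv_index h one_pos)

lemma integral_charFun (α : Fin m → ℤ) :
    ∫ x : Torus m, charFun α x = if α = 0 then 1 else 0 := by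
  unfold _root_.charFun
  rw [MeasureTheory.integral_fintype_prod_volume_eq_prod (f := fun i (y : AddCircle (1:ℝ)) => (fourier (α i) y : ℂ))]
  simp only [integral_fourier_one]
  split_ifs with h
  · subst h; simp
  · obtain ⟨i, hi⟩ := Function.ne_iff.mp h
    exact Finset.prod_eq_zero (Finset.mem_univ i) (by simpa using hi)

end Aux

namespace Aux
variable {m : ℕ}

lemma inner_L2 (f g : Lp2 m) :
    (inner ℂ f g : ℂ) = ∫ x, conj ((f : Torus m → ℂ) x) * (g : Torus m → ℂ) x := by
  rw [MeasureTheory.L2.inner_def]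
  congr 1
  funext a
  exact RCLike.inner_apply' _ _

lemma coeFn_charLp (α : Fin m → ℤ) :
    (charLp α : Torus m → ℂ) =ᵐ[(volume : Measure (Torus m))] charFun α :=
  MemLp.coeFn_toLp _

lemma coeff_eq_integral (g : Lp2 m) (α : Fin m → ℤ) :
    coeff g α = ∫ x, conj (charFun α x) * (g : Torus m → ℂ) x := by
  rw [coeff, inner_L2]
  refine integral_congr_ae ?_
  filter_upwards [coeFn_charLp α] with x hx
  rw [hx]

lemma orthonormal_charLp : Orthonormal ℂ (charLp (n := m)) := by
  rw [orthonormal_iff_ite]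
  intro α β
  rw [inner_L2]
  have : ∫ x, conj ((charLp α : Torus m → ℂ) x) * (charLp β : Torus m → ℂ) x
      = ∫ x, charFun (β - α) x := by
    refine integral_congr_ae ?_
    filter_upwards [coeFn_charLp α, coeFn_charLp β] with x h1 h2
    rw [h1, h2, conj_charFun, charFun_mul, neg_add_eq_sub]
  rw [this, integral_charFun]
  simp only [sub_eq_zero]
  by_cases h : α = β
  · simp [h]
  · rw [if_neg (fun hh => h hh.symm), if_neg h]

/-- The characters as continuous maps. -/
def charCM (α : Fin m → ℤ) : C(Torus m, ℂ) := ⟨charFun α, charFun_continuous α⟩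

/-- The star subalgebra generated by the characters. -/
def charSubalgebra (m : ℕ) : StarSubalgebra ℂ C(Torus m, ℂ) where
  toSubalgebra := Algebra.adjoin ℂ (Set.range (charCM (m := m)))
  star_mem' := by
    show Algebra.adjoin ℂ (Set.range (charCM (m := m))) ≤
      star (Algebra.adjoin ℂ (Set.range (charCM (m := m))))
    refine Algebra.adjoin_le ?_
    rintro - ⟨α, rfl⟩
    refine Algebra.subset_adjoin ⟨-α, ?_⟩
    ext x
    show charFun (-α) x = conj (charFun α x)
    rw [conj_charFun]

lemma charSubalgebra_coe (m : ℕ) :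
    Subalgebra.toSubmodule (charSubalgebra m).toSubalgebra
      = Submodule.span ℂ (Set.range (charCM (m := m))) := by
  apply Algebra.adjoin_eq_span_of_subset
  refine Set.Subset.trans ?_ Submodule.subset_span
  intro x hx
  refine Submonoid.closure_induction (fun _ => id) ⟨0, ?_⟩ ?_ hx
  · ext1 z; exact charFun_zero_eq z
  · rintro - - - - ⟨α, rfl⟩ ⟨β, rfl⟩
    refine ⟨α + β, ?_⟩
    ext1 z
    exact (charFun_mul α β z).symm

lemma charSubalgebra_separatesPoints (m : ℕ) : (charSubalgebra m).SeparatesPoints := by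
  intro x y hxy
  obtain ⟨i, hi⟩ := Function.ne_iff.mp hxy
  refine ⟨_, ⟨charCM (Pi.single i 1), Algebra.subset_adjoin ⟨_, rfl⟩, rfl⟩, ?_⟩
  show charFun (Pi.single i 1) x ≠ charFun (Pi.single i 1) y
  unfold _root_.charFun
  rw [Fintype.prod_eq_single i (fun j hj => by rw [Pi.single_eq_of_ne hj, fourier_zero]),
    Fintype.prod_eq_single i (fun j hj => by rw [Pi.single_eq_of_ne hj, fourier_zero]),
    Pi.single_eq_same]
  intro h
  rw [fourier_one, fourier_one, Circle.coe_inj] at h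
  exact hi (AddCircle.injective_toCircle one_ne_zero h)

lemma charSubalgebra_closure_eq_top (m : ℕ) :
    (charSubalgebra m).topologicalClosure = ⊤ :=
  ContinuousMap.starSubalgebra_topologicalClosure_eq_top_of_separatesPoints _
    (charSubalgebra_separatesPoints m)

lemma span_charCM_closure_eq_top (m : ℕ) :
    (Submodule.span ℂ (Set.range (charCM (m := m)))).topologicalClosure = ⊤ := by
  rw [← charSubalgebra_coe]
  exact congr_arg (Subalgebra.toSubmodule <| StarSubalgebra.toSubalgebra ·)
    (charSubalgebra_closure_eq_top m)

lemma span_charLp_closure_eq_top (m : ℕ) :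
    (Submodule.span ℂ (Set.range (charLp (n := m)))).topologicalClosure = ⊤ := by
  have H := (ContinuousMap.toLp_denseRange (p := 2) ℂ (volume : Measure (Torus m)) ℂ
    ENNReal.ofNat_ne_top).topologicalClosure_map_submodule
      (span_charCM_closure_eq_top m)
  rw [Submodule.map_span, ← Set.range_comp] at H
  convert H using 3
  · rfl
  refine congr_arg Set.range (funext fun α => ?_)
  show charLp α = ContinuousMap.toLp 2 volume ℂ (charCM α)
  apply Lp.ext
  filter_upwards [coeFn_charLp α, ContinuousMap.coeFn_toLp (p := 2)
    (volume : Measure (Torus m)) (𝕜 := ℂ) (charCM α)] with x h1 h2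
  rw [h1, h2]; rfl

/-- The Hilbert basis of characters. -/
def charBasis (m : ℕ) : HilbertBasis (Fin m → ℤ) ℂ (Lp2 m) :=
  HilbertBasis.mk orthonormal_charLp (span_charLp_closure_eq_top m).ge

lemma charBasis_coe (m : ℕ) (α : Fin m → ℤ) : charBasis m α = charLp α :=
  congrFun (HilbertBasis.coe_mk _ _) α

lemma inner_eq_zero_of_coeff (F G : Lp2 m)
    (h : ∀ β : Fin m → ℤ, coeff G β ≠ 0 → (inner ℂ F (charLp β) : ℂ) = 0) :
    (inner ℂ F G : ℂ) = 0 := by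
  rw [← (charBasis m).tsum_inner_mul_inner F G]
  refine (tsum_congr (fun β => ?_)).trans tsum_zero
  beta_reduce
  have hb := @HilbertBasis.repr_symm_single (Fin m → ℤ) ℂ _ _ _ _
    (fun a b => Classical.propDecidable (a = b)) (charBasis m) β
  rw [charBasis_coe]
  by_cases hG : coeff G β = 0
  · rw [show (inner ℂ (charLp β) G : ℂ) = coeff G β from rfl, hG, mul_zero]
  · rw [h β hG, zero_mul]

end Aux
namespace Aux
variable {m : ℕ}

lemma conj_charFun_mul (α β : Fin m → ℤ) (x : Torus m) :
    conj (charFun α x) * charFun β x = charFun (β - α) x := by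
  rw [conj_charFun, charFun_mul, neg_add_eq_sub]

lemma conj_charFun_mul' (α β : Fin m → ℤ) (x : Torus m) :
    conj (charFun α x) * charFun β x = conj (charFun (α - β) x) := by
  rw [conj_charFun, conj_charFun, charFun_mul]
  congr 1
  abel

lemma exists_bound {φ : Torus m → ℂ} (hφ : MemLp φ ⊤ (volume : Measure (Torus m))) :
    ∃ C : ℝ, 0 ≤ C ∧ ∀ᵐ x ∂(volume : Measure (Torus m)), ‖φ x‖ ≤ C := by
  refine ⟨(eLpNormEssSup φ volume).toReal, ENNReal.toReal_nonneg, ?_⟩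
  have h1 := enorm_ae_le_eLpNormEssSup φ (volume : Measure (Torus m))
  have h2 : eLpNormEssSup φ volume ≠ ⊤ := by
    have := hφ.2
    rw [eLpNorm_exponent_top] at this
    exact this.ne
  filter_upwards [h1] with x hx
  calc ‖φ x‖ = (‖φ x‖ₑ).toReal := by simp
  _ ≤ _ := ENNReal.toReal_mono h2 hx

lemma memL2_mul {φ : Torus m → ℂ} {F : Torus m → ℂ}
    (hφ : MemLp φ ⊤ (volume : Measure (Torus m)))
    (hF : MemLp F 2 (volume : Measure (Torus m))) :
    MemLp (fun x => φ x * F x) 2 (volume : Measure (Torus m)) := by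
  obtain ⟨C, hC0, hC⟩ := exists_bound hφ
  refine MemLp.of_le (hF.const_smul (C : ℂ)) (hφ.aestronglyMeasurable.mul hF.aestronglyMeasurable) ?_
  filter_upwards [hC] with x hx
  rw [Pi.smul_apply, norm_smul, Complex.norm_real, Real.norm_of_nonneg hC0, norm_mul]
  exact mul_le_mul_of_nonneg_right hx (norm_nonneg _)

lemma memLinf_mul {φ ψ : Torus m → ℂ}
    (hφ : MemLp φ ⊤ (volume : Measure (Torus m)))
    (hψ : MemLp ψ ⊤ (volume : Measure (Torus m))) :
    MemLp (fun x => φ x * ψ x) ⊤ (volume : Measure (Torus m)) := by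
  obtain ⟨C, hC0, hC⟩ := exists_bound hφ
  obtain ⟨D, hD0, hD⟩ := exists_bound hψ
  refine MemLp.of_bound (hφ.aestronglyMeasurable.mul hψ.aestronglyMeasurable) (C * D) ?_
  filter_upwards [hC, hD] with x h1 h2
  rw [norm_mul]
  exact mul_le_mul h1 h2 (norm_nonneg _) hC0

lemma memLinf_conj {φ : Torus m → ℂ} (hφ : MemLp φ ⊤ (volume : Measure (Torus m))) :
    MemLp (fun x => conj (φ x)) ⊤ (volume : Measure (Torus m)) :=
  MemLp.of_le hφ (RCLike.continuous_conj.comp_aestronglyMeasurable hφ.aestronglyMeasurable)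
    (Filter.Eventually.of_forall fun x => by simp)

lemma memLinf_charFun (α : Fin m → ℤ) :
    MemLp (charFun α) ⊤ (volume : Measure (Torus m)) :=
  MemLp.of_bound (charFun_continuous α).aestronglyMeasurable 1
    (Filter.Eventually.of_forall fun x => (charFun_norm α x).le)

/-- The main multiplier lemma: the `α`-th Fourier coefficient of `φ · F` vanishes
provided `φ̂(α - β) = 0` whenever `F̂(β) ≠ 0`. -/
lemma coeff_mul_eq_zero {φ : Torus m → ℂ} (hφ : MemLp φ ⊤ (volume : Measure (Torus m)))
    (F g : Lp2 m)
    (hg : (g : Torus m → ℂ) =ᵐ[(volume : Measure (Torus m))]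
      fun x => φ x * (F : Torus m → ℂ) x)
    (α : Fin m → ℤ)
    (h : ∀ β : Fin m → ℤ, coeff F β ≠ 0 →
      ∫ x, conj (charFun (α - β) x) * φ x ∂(volume : Measure (Torus m)) = 0) :
    coeff g α = 0 := by
  have hGmem : MemLp (fun x => charFun α x * conj (φ x)) ⊤ (volume : Measure (Torus m)) :=
    memLinf_mul (memLinf_charFun α) (memLinf_conj hφ)
  have hG2 : MemLp (fun x => charFun α x * conj (φ x)) 2 (volume : Measure (Torus m)) :=
    hGmem.mono_exponent le_top
  set G : Lp2 m := hG2.toLp _ with hGdef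
  have hGcoe : (G : Torus m → ℂ) =ᵐ[(volume : Measure (Torus m))]
      fun x => charFun α x * conj (φ x) := MemLp.coeFn_toLp _
  have key : coeff g α = inner ℂ G F := by
    rw [coeff_eq_integral, inner_L2]
    refine integral_congr_ae ?_
    filter_upwards [hg, hGcoe] with x h1 h2
    rw [h1, h2]
    simp only [map_mul, Complex.conj_conj]
    ring
  rw [key]
  refine inner_eq_zero_of_coeff G F ?_
  intro β hβ
  have : (inner ℂ G (charLp β) : ℂ) = ∫ x, conj (charFun (α - β) x) * φ x
      ∂(volume : Measure (Torus m)) := by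
    rw [inner_L2]
    refine integral_congr_ae ?_
    filter_upwards [hGcoe, coeFn_charLp β] with x h1 h2
    rw [h1, h2]
    simp only [map_mul, Complex.conj_conj]
    rw [mul_right_comm, conj_charFun_mul' α β x]
  rw [this]
  exact h β hβ

end Aux
namespace Aux
variable {n : ℕ}

/-- The measurable equivalence splitting off the last coordinate. -/
def lastEquiv (n : ℕ) : Torus (n+1) ≃ᵐ (AddCircle (1:ℝ)) × Torus n :=
  MeasurableEquiv.piFinSuccAbove (fun _ : Fin (n+1) => AddCircle (1:ℝ)) (Fin.last n)

lemma lastEquiv_fst (x : Torus (n+1)) : (lastEquiv n x).1 = x (Fin.last n) := rfl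

lemma lastEquiv_snd (x : Torus (n+1)) : (lastEquiv n x).2 = Fin.init x :=
  Fin.removeNth_last x

lemma lastEquiv_mp : MeasurePreserving (lastEquiv n) (volume : Measure (Torus (n+1)))
    ((volume : Measure (AddCircle (1:ℝ))).prod (volume : Measure (Torus n))) :=
  measurePreserving_piFinSuccAbove (fun _ : Fin (n+1) => (volume : Measure (AddCircle (1:ℝ))))
    (Fin.last n)

lemma qmp_init : Measure.QuasiMeasurePreserving (Fin.init : Torus (n+1) → Torus n)
    (volume : Measure (Torus (n+1))) (volume : Measure (Torus n)) := by
  have h2 : Measure.QuasiMeasurePreserving (Prod.snd)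
      ((volume : Measure (AddCircle (1:ℝ))).prod (volume : Measure (Torus n)))
      (volume : Measure (Torus n)) := Measure.quasiMeasurePreserving_snd
  have := h2.comp (lastEquiv_mp (n := n)).quasiMeasurePreserving
  rwa [show (Prod.snd ∘ (lastEquiv n)) = (Fin.init : Torus (n+1) → Torus n) from
    funext fun x => lastEquiv_snd x] at this

lemma liftLast_aesm {ψ : Torus n → ℂ} (h : AEStronglyMeasurable ψ (volume : Measure (Torus n))) :
    AEStronglyMeasurable (liftLast ψ) (volume : Measure (Torus (n+1))) :=
  h.comp_quasiMeasurePreserving qmp_init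

lemma memLinf_liftLast {ψ : Torus n → ℂ} (hψ : MemLp ψ ⊤ (volume : Measure (Torus n))) :
    MemLp (liftLast ψ) ⊤ (volume : Measure (Torus (n+1))) := by
  obtain ⟨C, _, hC⟩ := exists_bound hψ
  exact MemLp.of_bound (liftLast_aesm hψ.aestronglyMeasurable) C (qmp_init.ae hC)

lemma liftLast_ae_eq {ψ₁ ψ₂ : Torus n → ℂ}
    (h : ψ₁ =ᵐ[(volume : Measure (Torus n))] ψ₂) :
    liftLast ψ₁ =ᵐ[(volume : Measure (Torus (n+1)))] liftLast ψ₂ :=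
  qmp_init.ae_eq h

lemma charFun_split (γ : Fin (n+1) → ℤ) (x : Torus (n+1)) :
    charFun γ x = fourier (γ (Fin.last n)) (x (Fin.last n))
      * charFun (Fin.init γ) (Fin.init x) := by
  unfold _root_.charFun
  rw [Fin.prod_univ_castSucc, mul_comm]
  rfl

/-- Factorization of the integral over the last coordinate. -/
lemma integral_charFun_mul_liftLast (γ : Fin (n+1) → ℤ) (ψ : Torus n → ℂ) :
    (∫ x : Torus (n+1), conj (charFun γ x) * liftLast ψ x ∂(volume : Measure (Torus (n+1))))
      = (if γ (Fin.last n) = 0 then 1 else 0)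
        * ∫ y : Torus n, conj (charFun (Fin.init γ) y) * ψ y ∂(volume : Measure (Torus n)) := by
  set A : AddCircle (1:ℝ) → ℂ := fun a => conj ((fourier (γ (Fin.last n)) a : ℂ)) with hA
  set B : Torus n → ℂ := fun y => conj (charFun (Fin.init γ) y) * ψ y with hB
  have hsplit : (fun x : Torus (n+1) => conj (charFun γ x) * liftLast ψ x)
      = fun x => A ((lastEquiv n x).1) * B ((lastEquiv n x).2) := by
    funext x
    rw [lastEquiv_fst, lastEquiv_snd, hA, hB]
    show _ = conj ((fourier (γ (Fin.last n)) (x (Fin.last n)) : ℂ))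
      * (conj (charFun (Fin.init γ) (Fin.init x)) * ψ (Fin.init x))
    rw [charFun_split γ x, map_mul, liftLast]
    ring
  calc (∫ x : Torus (n+1), conj (charFun γ x) * liftLast ψ x ∂(volume : Measure (Torus (n+1))))
      = ∫ p : AddCircle (1:ℝ) × Torus n, A p.1 * B p.2
          ∂((volume : Measure (AddCircle (1:ℝ))).prod (volume : Measure (Torus n))) := by
        rw [hsplit]
        exact (lastEquiv_mp (n := n)).integral_comp (lastEquiv n).measurableEmbedding
          (fun p => A p.1 * B p.2)
    _ = (∫ a : AddCircle (1:ℝ), A a)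
          * ∫ y : Torus n, B y ∂(volume : Measure (Torus n)) :=
        MeasureTheory.integral_prod_mul A B
    _ = (if γ (Fin.last n) = 0 then 1 else 0)
          * ∫ y : Torus n, conj (charFun (Fin.init γ) y) * ψ y ∂(volume : Measure (Torus n)) := by
        rw [hB]
        congr 1
        rw [hA]
        rw [show (fun a : AddCircle (1:ℝ) => conj ((fourier (γ (Fin.last n)) a : ℂ)))
          = fun a : AddCircle (1:ℝ) => conj ((fun b : AddCircle (1:ℝ) =>
            (fourier (γ (Fin.last n)) b : ℂ)) a) from rfl, integral_conj, integral_fourier_one]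
        split_ifs with h <;> simp

end Aux
namespace Aux
variable {n : ℕ}

lemma H2resLast_coeff_support {F : Lp2 (n+1)} (hF : F ∈ H2resLast n)
    {β : Fin (n+1) → ℤ} (hβ : coeff F β ≠ 0) :
    (∀ i, 0 ≤ β i) ∧ β (Fin.last n) = 0 := by
  have h := mt (hF β) hβ
  push_neg at h
  exact h

lemma coeff_piece_eq_zero {ψ : Torus n → ℂ} (hψ : IsHinf ψ) (l : ℕ)
    {F g : Lp2 (n+1)} (hF : F ∈ H2resLast n)
    (hg : (g : Torus (n+1) → ℂ) =ᵐ[(volume : Measure (Torus (n+1)))]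
      fun x => (charFun (Pi.single (Fin.last n) (l:ℤ)) x * liftLast ψ x)
        * (F : Torus (n+1) → ℂ) x)
    (α : Fin (n+1) → ℤ) (hα : (∃ i, α i < 0) ∨ α (Fin.last n) ≠ (l:ℤ)) :
    coeff g α = 0 := by
  have hφ : MemLp (fun x : Torus (n+1) =>
      charFun (Pi.single (Fin.last n) (l:ℤ)) x * liftLast ψ x) ⊤
      (volume : Measure (Torus (n+1))) :=
    memLinf_mul (memLinf_charFun _) (memLinf_liftLast hψ.memLinf)
  refine coeff_mul_eq_zero hφ F g hg α ?_
  intro β hβ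
  obtain ⟨hβpos, hβlast⟩ := H2resLast_coeff_support hF hβ
  have hre : (fun x : Torus (n+1) => conj (charFun (α - β) x) *
      (charFun (Pi.single (Fin.last n) (l:ℤ)) x * liftLast ψ x))
      = fun x => conj (charFun (α - β - Pi.single (Fin.last n) (l:ℤ)) x) * liftLast ψ x := by
    funext x
    rw [← mul_assoc, conj_charFun_mul' (α - β) _ x]
  rw [hre, integral_charFun_mul_liftLast]
  set γ := α - β - Pi.single (Fin.last n) (l:ℤ) with hγ
  have hγlast : γ (Fin.last n) = α (Fin.last n) - l := by
    have h' := congrFun hγ (Fin.last n)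
    simp only [Pi.sub_apply] at h'
    rw [hβlast, Pi.single_eq_same] at h'
    rw [h']
    ring
  rcases hα with ⟨i, hi⟩ | hlast
  · rcases Fin.eq_castSucc_or_eq_last i with ⟨j, rfl⟩ | rfl
    · have hjj : Fin.castSucc j ≠ Fin.last n := (Fin.castSucc_lt_last j).ne
      have hneg : Fin.init γ j < 0 := by
        show γ (Fin.castSucc j) < 0
        have hsingle : (Pi.single (Fin.last n) (l:ℤ) : Fin (n+1) → ℤ) (Fin.castSucc j) = 0 :=
          Pi.single_eq_of_ne hjj _
        have hb := hβpos (Fin.castSucc j)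
        simp only [hγ, Pi.sub_apply, hsingle, sub_zero]
        omega
      rw [hψ.analytic (Fin.init γ) ⟨j, hneg⟩, mul_zero]
    · have hne : ¬ (γ (Fin.last n) = 0) := by
        rw [hγlast]
        have h0 : (0:ℤ) ≤ (l:ℤ) := Int.ofNat_nonneg l
        omega
      rw [if_neg hne, zero_mul]
  · have hne : ¬ (γ (Fin.last n) = 0) := by
      rw [hγlast]
      omega
    rw [if_neg hne, zero_mul]

lemma mul_liftLast_mem_H2resLast {q : Torus n → ℂ} (hq : IsHinf q) {F : Lp2 (n+1)}
    (hF : F ∈ H2resLast n) (F' : Lp2 (n+1))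
    (hF' : (F' : Torus (n+1) → ℂ) =ᵐ[(volume : Measure (Torus (n+1)))]
      fun x => liftLast q x * (F : Torus (n+1) → ℂ) x) : F' ∈ H2resLast n := by
  intro α hα
  refine coeff_piece_eq_zero hq 0 hF ?_ α ?_
  · refine hF'.trans (Filter.Eventually.of_forall fun x => ?_)
    have h0 : charFun (Pi.single (Fin.last n) (((0:ℕ)):ℤ)) x = 1 := by
      rw [show Pi.single (Fin.last n) (((0:ℕ)):ℤ) = (0 : Fin (n+1) → ℤ) by simp]
      exact charFun_zero_eq x
    show liftLast q x * (F : Torus (n+1) → ℂ) x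
      = charFun (Pi.single (Fin.last n) (((0:ℕ)):ℤ)) x * liftLast q x
        * (F : Torus (n+1) → ℂ) x
    rw [h0, one_mul]
  · rcases hα with h | h
    · exact Or.inl h
    · exact Or.inr (by simpa using h)

lemma zmul_mem_H2resLast {i : Fin (n+1)} (hi : i ≠ Fin.last n) {F F' : Lp2 (n+1)}
    (hF : F ∈ H2resLast n)
    (hF' : (F' : Torus (n+1) → ℂ) =ᵐ[(volume : Measure (Torus (n+1)))]
      fun x => zCoord i x * (F : Torus (n+1) → ℂ) x) : F' ∈ H2resLast n := by
  intro α hα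
  have hz : MemLp (zCoord i) ⊤ (volume : Measure (Torus (n+1))) :=
    memLinf_charFun (Pi.single i 1)
  refine coeff_mul_eq_zero hz F F' hF' α ?_
  intro β hβ
  obtain ⟨hβpos, hβlast⟩ := H2resLast_coeff_support hF hβ
  have hre : (fun x : Torus (n+1) => conj (charFun (α - β) x) * zCoord i x)
      = fun x => charFun (Pi.single i (1:ℤ) - (α - β)) x := by
    funext x
    exact conj_charFun_mul (α - β) (Pi.single i 1) x
  rw [hre, integral_charFun, if_neg]
  intro hzero
  have hαeq : ∀ k, α k = β k + (Pi.single i (1:ℤ) : Fin (n+1) → ℤ) k := by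
    intro k
    have := congrFun hzero k
    simp only [Pi.sub_apply, Pi.zero_apply] at this
    omega
  rcases hα with ⟨k, hk⟩ | h
  · have h1 := hβpos k
    have h3 : (0:ℤ) ≤ (Pi.single i (1:ℤ) : Fin (n+1) → ℤ) k := by
      rcases eq_or_ne k i with rfl | hne
      · simp
      · simp [Pi.single_eq_of_ne hne]
    have := hαeq k
    omega
  · have h2 := hαeq (Fin.last n)
    rw [hβlast, Pi.single_eq_of_ne (Ne.symm hi)] at h2
    omega

lemma mulZmem {m : ℕ} (i : Fin m) (g : Lp2 m) :
    MemLp (fun x => zCoord i x * (g : Torus m → ℂ) x) 2 (volume : Measure (Torus m)) := by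
  refine MemLp.of_le (Lp.memLp g)
    (((charFun_continuous (Pi.single i 1)).aestronglyMeasurable).mul
      (Lp.aestronglyMeasurable g)) ?_
  refine Filter.Eventually.of_forall fun x => ?_
  rw [norm_mul, show ‖zCoord i x‖ = 1 from charFun_norm _ x, one_mul]

/-- Multiplication by `z_i` as a continuous linear operator on `L²`. -/
def mulZ {m : ℕ} (i : Fin m) : Lp2 m →L[ℂ] Lp2 m :=
  LinearMap.mkContinuous
    { toFun := fun g => (mulZmem i g).toLp _
      map_add' := by
        intro g1 g2
        rw [← MemLp.toLp_add (mulZmem i g1) (mulZmem i g2)]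
        have hae : (fun x => zCoord i x * ((g1 + g2 : Lp2 m) : Torus m → ℂ) x)
            =ᵐ[(volume : Measure (Torus m))]
            (fun x => zCoord i x * (g1 : Torus m → ℂ) x)
              + fun x => zCoord i x * (g2 : Torus m → ℂ) x := by
          filter_upwards [Lp.coeFn_add g1 g2] with x hx
          show zCoord i x * ((g1 + g2 : Lp2 m) : Torus m → ℂ) x = _
          rw [hx]
          simp [Pi.add_apply, mul_add]
        show MemLp.toLp (fun x => zCoord i x * ((g1 + g2 : Lp2 m) : Torus m → ℂ) x)
            (mulZmem i (g1 + g2))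
          = MemLp.toLp ((fun x => zCoord i x * (g1 : Torus m → ℂ) x)
              + fun x => zCoord i x * (g2 : Torus m → ℂ) x)
            ((mulZmem i g1).add (mulZmem i g2))
        exact MemLp.toLp_congr _ _ hae
      map_smul' := by
        intro c g
        rw [RingHom.id_apply, ← MemLp.toLp_const_smul c (mulZmem i g)]
        have hae : (fun x => zCoord i x * ((c • g : Lp2 m) : Torus m → ℂ) x)
            =ᵐ[(volume : Measure (Torus m))]
            c • fun x => zCoord i x * (g : Torus m → ℂ) x := by
          filter_upwards [Lp.coeFn_smul c g] with x hx
          show zCoord i x * ((c • g : Lp2 m) : Torus m → ℂ) x = _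
          rw [hx]
          simp only [Pi.smul_apply, smul_eq_mul]
          ring
        show MemLp.toLp (fun x => zCoord i x * ((c • g : Lp2 m) : Torus m → ℂ) x)
            (mulZmem i (c • g))
          = MemLp.toLp (c • fun x => zCoord i x * (g : Torus m → ℂ) x)
            ((mulZmem i g).const_smul c)
        exact MemLp.toLp_congr _ _ hae }
    1
    (by
      intro g
      rw [one_mul]
      simp only [LinearMap.coe_mk, AddHom.coe_mk]
      show ‖MemLp.toLp (fun x => zCoord i x * (g : Torus m → ℂ) x) (mulZmem i g)‖ ≤ ‖g‖
      rw [Lp.norm_toLp]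
      have heq : eLpNorm (fun x => zCoord i x * (g : Torus m → ℂ) x) 2
          (volume : Measure (Torus m)) = eLpNorm (g : Torus m → ℂ) 2 volume := by
        refine eLpNorm_congr_norm_ae (Filter.Eventually.of_forall fun x => ?_)
        rw [norm_mul, show ‖zCoord i x‖ = 1 from charFun_norm _ x, one_mul]
      rw [heq, ← Lp.norm_def])

lemma coeFn_mulZ {m : ℕ} (i : Fin m) (g : Lp2 m) :
    (mulZ i g : Torus m → ℂ) =ᵐ[(volume : Measure (Torus m))]
      fun x => zCoord i x * (g : Torus m → ℂ) x := by
  have h : mulZ i g = MemLp.toLp (fun x => zCoord i x * (g : Torus m → ℂ) x)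
      (mulZmem i g) := rfl
  rw [h]
  exact MemLp.coeFn_toLp (mulZmem i g)

lemma mulZ_unique {m : ℕ} (i : Fin m) {g h : Lp2 m}
    (hh : (h : Torus m → ℂ) =ᵐ[(volume : Measure (Torus m))]
      fun x => zCoord i x * (g : Torus m → ℂ) x) : mulZ i g = h :=
  Lp.ext ((coeFn_mulZ i g).trans hh.symm)

variable {f : ℕ → Torus n → ℂ}

lemma mulZ_seqPiece_castSucc (j : Fin n) {l : ℕ} {g : Lp2 (n+1)}
    (hg : g ∈ seqPiece f l) : mulZ (Fin.castSucc j) g ∈ seqPiece f l := by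
  obtain ⟨F, hF, hgF⟩ := hg
  set i := Fin.castSucc j with hidef
  have hF'coe : ((mulZmem i F).toLp _ : Torus (n+1) → ℂ)
      =ᵐ[(volume : Measure (Torus (n+1)))]
      fun x => zCoord i x * (F : Torus (n+1) → ℂ) x := MemLp.coeFn_toLp _
  refine ⟨(mulZmem i F).toLp _,
    zmul_mem_H2resLast (Fin.castSucc_lt_last j).ne hF hF'coe, ?_⟩
  filter_upwards [coeFn_mulZ i g, hgF, hF'coe] with x h1 h2 h3
  rw [h1, h2, h3]
  ring

lemma mulZ_seqPiece_last (hf : SeqCond f) {l : ℕ} {g : Lp2 (n+1)}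
    (hg : g ∈ seqPiece f l) : mulZ (Fin.last n) g ∈ seqPiece f (l+1) := by
  obtain ⟨F, hF, hgF⟩ := hg
  obtain ⟨q, hq, hqeq⟩ := hf.2 l
  have hmem : MemLp (fun x => liftLast q x * (F : Torus (n+1) → ℂ) x) 2
      (volume : Measure (Torus (n+1))) :=
    memL2_mul (memLinf_liftLast hq.1.memLinf) (Lp.memLp F)
  have hF'coe : (hmem.toLp _ : Torus (n+1) → ℂ) =ᵐ[(volume : Measure (Torus (n+1)))]
      fun x => liftLast q x * (F : Torus (n+1) → ℂ) x := MemLp.coeFn_toLp _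
  refine ⟨hmem.toLp _, mul_liftLast_mem_H2resLast hq.1 hF _ hF'coe, ?_⟩
  have hlift : liftLast (f l) =ᵐ[(volume : Measure (Torus (n+1)))]
      fun x => liftLast (f (l+1)) x * liftLast q x :=
    (liftLast_ae_eq hqeq).symm
  have hchar : ∀ x : Torus (n+1),
      zCoord (Fin.last n) x * charFun (Pi.single (Fin.last n) (l:ℤ)) x
        = charFun (Pi.single (Fin.last n) ((l+1:ℕ):ℤ)) x := by
    intro x
    have harg : (1:ℤ) + (l:ℤ) = ((l+1:ℕ):ℤ) := by push_cast; ring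
    rw [show zCoord (Fin.last n) x = charFun (Pi.single (Fin.last n) (1:ℤ)) x from rfl,
      charFun_mul, ← Pi.single_add, harg]
  filter_upwards [coeFn_mulZ (Fin.last n) g, hgF, hF'coe, hlift] with x h1 h2 h3 h4
  rw [h1, h2, h3, ← hchar x]
  rw [show liftLast (f l) x = liftLast (f (l+1)) x * liftLast q x from h4]
  ring

lemma seqM_coe (g : Lp2 (n+1)) :
    g ∈ (seqM f : Set (Lp2 (n+1))) ↔
      g ∈ closure ((Submodule.span ℂ (⋃ l : ℕ, seqPiece f l) : Submodule ℂ (Lp2 (n+1))) :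
        Set (Lp2 (n+1))) := Iff.rfl

lemma seqM_shift (hf : SeqCond f) (i : Fin (n+1)) :
    mulSet (zCoord i) (seqM f : Set (Lp2 (n+1))) ⊆ (seqM f : Set (Lp2 (n+1))) := by
  rintro h ⟨g, hgM, hae⟩
  rw [show h = mulZ i g from (mulZ_unique i hae).symm]
  set S : Set (Lp2 (n+1)) := ⋃ l : ℕ, seqPiece f l with hS
  have himg : ∀ x ∈ S, mulZ i x ∈ S := by
    intro x hx
    obtain ⟨l, hl⟩ := Set.mem_iUnion.mp hx
    rcases Fin.eq_castSucc_or_eq_last i with ⟨j, rfl⟩ | rfl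
    · exact Set.mem_iUnion.mpr ⟨l, mulZ_seqPiece_castSucc j hl⟩
    · exact Set.mem_iUnion.mpr ⟨l+1, mulZ_seqPiece_last hf hl⟩
  have hTspan : ∀ x ∈ Submodule.span ℂ S, mulZ i x ∈ Submodule.span ℂ S := by
    intro x hx
    induction hx using Submodule.span_induction with
    | mem y hy => exact Submodule.subset_span (himg y hy)
    | zero => rw [map_zero]; exact Submodule.zero_mem _
    | add a b _ _ ha hb => rw [map_add]; exact Submodule.add_mem _ ha hb
    | smul c a _ ha => rw [ContinuousLinearMap.map_smul]; exact Submodule.smul_mem _ c ha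
  have hclos : mulZ i g ∈ closure ((mulZ i) '' ((Submodule.span ℂ S : Submodule ℂ _) :
      Set (Lp2 (n+1)))) :=
    image_closure_subset_closure_image (mulZ i).continuous ⟨g, hgM, rfl⟩
  refine closure_mono ?_ hclos
  rintro y ⟨x, hx, rfl⟩
  exact hTspan x hx

lemma isClosed_H2carrier (m : ℕ) : IsClosed ((H2 m : Submodule ℂ (Lp2 m)) : Set (Lp2 m)) := by
  have hset : ((H2 m : Submodule ℂ (Lp2 m)) : Set (Lp2 m)) =
      ⋂ (α : Fin m → ℤ) (_ : ∃ i, α i < 0),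
        {g : Lp2 m | (innerSL ℂ (charLp α)) g = (0:ℂ)} := by
    ext g
    simp only [Set.mem_iInter, Set.mem_setOf_eq]
    exact Iff.rfl
  rw [hset]
  exact isClosed_iInter fun α => isClosed_iInter fun _ =>
    isClosed_eq (innerSL ℂ (charLp α)).continuous continuous_const

lemma seqPiece_subset_H2 (hf : ∀ l, IsHinf (f l)) (l : ℕ) :
    seqPiece f l ⊆ ((H2 (n+1) : Submodule ℂ (Lp2 (n+1))) : Set (Lp2 (n+1))) := by
  rintro g ⟨F, hF, hg⟩
  intro α hα
  exact coeff_piece_eq_zero (hf l) l hF hg α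
    (Or.inl hα)

end Aux

/-- a sequence-based subspace `⊕_{l≥0} f_l H²(𝔻^{n-1}) z_n^l` (with every `f_l`
and every quotient `f_l/f_{l+1}` generalized inner) is a closed subspace of `H²(𝔻ⁿ)` invariant
under multiplication by every coordinate. -/
theorem stmt_1 {n : ℕ} (hn : 0 < n) (f : ℕ → Torus n → ℂ) (hf : SeqCond f) :
    (seqM f : Set (Lp2 (n+1))) ⊆ H2set (n+1) ∧
      IsInvariantSubspace (seqM f : Set (Lp2 (n+1))) := by
  have hsub : seqM f ≤ H2 (n+1) :=
    Submodule.topologicalClosure_minimal _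
      (Submodule.span_le.mpr (Set.iUnion_subset fun l =>
        Aux.seqPiece_subset_H2 (fun l' => (hf.1 l').1) l))
      (Aux.isClosed_H2carrier (n+1))
  refine ⟨fun g hg => hsub hg, ?_⟩
  exact
    { zero_mem := (seqM f).zero_mem
      add_mem := fun a b ha hb => (seqM f).add_mem ha hb
      smul_mem := fun c a ha => (seqM f).smul_mem c ha
      closed := Submodule.isClosed_topologicalClosure _
      shift_mem := fun i => Aux.seqM_shift hf i }


end
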